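/- For each n ∈ ℕ, the k-algebra homomorphism Ψₙ from the (n+1)-fold tensor power F^{⊗(n+1)} (over k) to the k-algebra of all functions (Fin (n+1) → Φ) → K (pointwise operations), determined on simple tensors by Ψₙ(f₀ ⊗ ⋯ ⊗ fₙ)(i) = ∏_{j=0}^{n} i(j)(f_j), is injective, and its range is exactly the set of G-homogeneous functions, i.e. those h : (Fin (n+1) → Φ) → K with g(h(i)) = h(g ∘ i) for all g ∈ G and all tuples i. -/

import Mathlib

open scoped TensorProduct

universe u

variable (k F K : Type u) [Field k] [CommRing F] [Algebra k F] [Field K] [Algebra k K]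

/-- The evaluation map `Ψₙ : F^{⊗(n+1)} → ((Fin (n+1) → Φ) → K)` (with `Φ = (F →ₐ[k] K)`),
determined on simple tensors by `Ψₙ(f₀ ⊗ ⋯ ⊗ fₙ)(i) = ∏_j i(j)(f_j)`. -/
noncomputable def Psi (n : ℕ) :
    (⨂[k] (_ : Fin (n + 1)), F) →ₗ[k] ((Fin (n + 1) → (F →ₐ[k] K)) → K) :=
  LinearMap.pi fun i =>
    PiTensorProduct.lift
      ((MultilinearMap.mkPiAlgebra k (Fin (n + 1)) K).compLinearMap fun j => (i j).toLinearMap)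

lemma psi_tprod (n : ℕ) (f : Fin (n + 1) → F) (i : Fin (n + 1) → (F →ₐ[k] K)) :
    Psi k F K n (PiTensorProduct.tprod k f) i = ∏ j : Fin (n + 1), (i j) (f j) := by
  simp [Psi]

/-- `Psi` evaluated at a tuple `i`, as an algebra hom. -/
noncomputable def PsiAlgHom (n : ℕ) (i : Fin (n + 1) → (F →ₐ[k] K)) :
    (⨂[k] (_ : Fin (n + 1)), F) →ₐ[k] K :=
  PiTensorProduct.liftAlgHom
    ((MultilinearMap.mkPiAlgebra k (Fin (n + 1)) K).compLinearMap fun j => (i j).toLinearMap)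
    (by simp) (fun x y => by simp [Finset.prod_mul_distrib])

lemma psiAlgHom_apply (n : ℕ) (i : Fin (n + 1) → (F →ₐ[k] K))
    (t : ⨂[k] (_ : Fin (n + 1)), F) :
    PsiAlgHom k F K n i t = Psi k F K n t i := rfl

lemma psi_homog (n : ℕ) (t : ⨂[k] (_ : Fin (n + 1)), F) (g : K ≃ₐ[k] K)
    (i : Fin (n + 1) → (F →ₐ[k] K)) :
    g (Psi k F K n t i) = Psi k F K n t (fun m => (g.toAlgHom).comp (i m)) := by
  induction t using PiTensorProduct.induction_on with
  | smul_tprod c f =>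
      have h1 : Psi k F K n (c • PiTensorProduct.tprod k f)
          = c • Psi k F K n (PiTensorProduct.tprod k f) := map_smul _ _ _
      rw [h1, Pi.smul_apply, Pi.smul_apply, psi_tprod, psi_tprod, Algebra.smul_def,
        Algebra.smul_def, map_mul, AlgEquiv.commutes, map_prod]
      exact congrArg _ (Finset.prod_congr rfl fun j _ => rfl)
  | add x y hx hy => simp [hx, hy]

set_option synthInstance.maxHeartbeats 400000 in
/-- Let `K/k` be finite Galois with group `G` and `F` a finite étale
`k`-algebra split by `K`. For each `n`, the map `Ψₙ`, determined on simple tensors by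
`Ψₙ(f₀ ⊗ ⋯ ⊗ fₙ)(i) = ∏_j i(j)(f_j)`, is injective and its range is exactly the set of
`G`-homogeneous functions `h` with `g(h(i)) = h(g ∘ i)` for all `g ∈ G` and all tuples `i`. -/
theorem psi_injective_range_homogeneous [IsGalois k K] [FiniteDimensional k K]
    [FiniteDimensional k F] [Algebra.Etale k F]
    (hcard : Nat.card (F →ₐ[k] K) = Module.finrank k F) (n : ℕ) :
    (∀ (f : Fin (n + 1) → F) (i : Fin (n + 1) → (F →ₐ[k] K)),
      Psi k F K n (PiTensorProduct.tprod k f) i = ∏ j : Fin (n + 1), (i j) (f j)) ∧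
    Function.Injective (Psi k F K n) ∧
    Set.range (Psi k F K n) =
      {h : (Fin (n + 1) → (F →ₐ[k] K)) → K |
        ∀ (g : K ≃ₐ[k] K) (i : Fin (n + 1) → (F →ₐ[k] K)),
          g (h i) = h (fun m => (g.toAlgHom).comp (i m))} := by
  classical
  -- `Φ` is finite
  have hΦfin : Finite (F →ₐ[k] K) := by
    rcases subsingleton_or_nontrivial F with hs | hn
    · have : IsEmpty (F →ₐ[k] K) :=
        ⟨fun φ => one_ne_zero (α := K)
          (by rw [← φ.map_one, Subsingleton.elim (1 : F) 0, map_zero])⟩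
      infer_instance
    · exact Nat.finite_of_card_ne_zero (by rw [hcard]; exact Module.finrank_pos.ne')
  have _inst : Fintype (F →ₐ[k] K) := Fintype.ofFinite _
  set V := ⨂[k] (_ : Fin (n + 1)), F with hVdef
  set d := Module.finrank k F with hd
  let b : Module.Basis (Fin d) k F := Module.finBasis k F
  -- V is spanned by pure tensors of basis vectors
  have hspan : Submodule.span k
      (Set.range fun σ : Fin (n + 1) → Fin d =>
        (PiTensorProduct.tprod k fun j => b (σ j) : V)) = ⊤ := by
    rw [eq_top_iff, ← PiTensorProduct.span_tprod_eq_top, Submodule.span_le]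
    rintro _ ⟨f, rfl⟩
    have hexp : (PiTensorProduct.tprod k f : V)
        = ∑ σ : Fin (n + 1) → Fin d,
            (∏ j, b.repr (f j) (σ j)) • PiTensorProduct.tprod k fun j => b (σ j) := by
      conv_lhs => rw [show f = fun j => ∑ m, b.repr (f j) m • b m from
        funext fun j => (b.sum_repr (f j)).symm]
      rw [MultilinearMap.map_sum]
      exact Finset.sum_congr rfl fun σ _ => MultilinearMap.map_smul_univ _ _ _
    rw [SetLike.mem_coe, hexp]
    exact Submodule.sum_mem _ fun σ _ =>
      Submodule.smul_mem _ _ (Submodule.subset_span ⟨σ, rfl⟩)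
  have hVfin : FiniteDimensional k V := by
    refine ⟨⟨Finset.univ.image fun σ : Fin (n + 1) → Fin d =>
      (PiTensorProduct.tprod k fun j => b (σ j) : V), ?_⟩⟩
    rw [Finset.coe_image, Finset.coe_univ, Set.image_univ]
    exact hspan
  have hfinrank_le : Module.finrank k V ≤ d ^ (n + 1) := by
    have h1 := finrank_span_le_card (R := k)
      (Set.range fun σ : Fin (n + 1) → Fin d =>
        (PiTensorProduct.tprod k fun j => b (σ j) : V))
    rw [hspan, finrank_top] at h1
    refine h1.trans ?_
    rw [Set.toFinset_card]
    calc Fintype.card (Set.range _) ≤ Fintype.card (Fin (n + 1) → Fin d) :=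
          Fintype.card_range_le _
      _ = d ^ (n + 1) := by simp [Fintype.card_fun]
  -- the base-changed evaluation map
  let B : K →ₗ[K] (V →ₗ[k] ((Fin (n + 1) → (F →ₐ[k] K)) → K)) :=
    { toFun := fun x => x • Psi k F K n
      map_add' := fun x y => add_smul x y _
      map_smul' := fun a x => by simp [mul_smul] }
  let Ψt : (K ⊗[k] V) →ₗ[K] ((Fin (n + 1) → (F →ₐ[k] K)) → K) :=
    TensorProduct.AlgebraTensorModule.lift B
  have hΨt_tmul : ∀ (x : K) (t : V), Ψt (x ⊗ₜ[k] t) = x • Psi k F K n t := fun x t => by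
    simp [Ψt, B]
  -- the evaluation functionals, base changed
  let Tb : (Fin (n + 1) → (F →ₐ[k] K)) → Module.Dual K (K ⊗[k] V) :=
    fun i => (LinearMap.proj i).comp Ψt
  have hTb_apply : ∀ i z, Tb i z = Ψt z i := fun i z => rfl
  -- the algebra homs are pairwise distinct as monoid homs
  have hT_inj : Function.Injective
      (fun i : Fin (n + 1) → (F →ₐ[k] K) => ((PsiAlgHom k F K n i : V →ₐ[k] K) : V →* K)) := by
    intro i i' hii
    funext j
    apply AlgHom.ext
    intro f
    have h1 : ∀ x : V, PsiAlgHom k F K n i x = PsiAlgHom k F K n i' x := fun x =>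
      DFunLike.congr_fun hii x
    have h2 := h1 (PiTensorProduct.tprod k (Function.update (fun _ => (1 : F)) j f))
    rw [psiAlgHom_apply, psiAlgHom_apply, psi_tprod, psi_tprod] at h2
    have hprod : ∀ (i₀ : Fin (n + 1) → (F →ₐ[k] K)),
        (∏ m, (i₀ m) (Function.update (fun _ => (1 : F)) j f m)) = i₀ j f := by
      intro i₀
      rw [Finset.prod_eq_single j]
      · rw [Function.update_self]
      · intro m _ hm
        rw [Function.update_of_ne hm]
        exact map_one _
      · intro hj; exact absurd (Finset.mem_univ j) hj
    rw [hprod, hprod] at h2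
    exact h2
  have hTindep : LinearIndependent K
      (fun i : Fin (n + 1) → (F →ₐ[k] K) =>
        (((PsiAlgHom k F K n i : V →ₐ[k] K) : V →* K) : V → K)) :=
    (linearIndependent_monoidHom V K).comp _ hT_inj
  -- the functionals `Tb` are linearly independent
  have hTb_indep : LinearIndependent K Tb := by
    rw [Fintype.linearIndependent_iff]
    intro c hc
    refine Fintype.linearIndependent_iff.mp hTindep c ?_
    funext t
    have h1 := congrArg (fun φ : Module.Dual K (K ⊗[k] V) => φ ((1 : K) ⊗ₜ[k] t)) hc
    simp [Tb, hΨt_tmul, mul_comm] at h1 ⊢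
    exact h1
  -- dimension count
  have hcardI : Fintype.card (Fin (n + 1) → (F →ₐ[k] K)) = d ^ (n + 1) := by
    rw [Fintype.card_fun, Fintype.card_fin, ← Nat.card_eq_fintype_card, hcard]
  have hbc : Module.finrank K (K ⊗[k] V) = Module.finrank k V := Module.finrank_baseChange
  have hge : d ^ (n + 1) ≤ Module.finrank k V := by
    have h1 := hTb_indep.fintype_card_le_finrank
    rw [hcardI] at h1
    rwa [Subspace.dual_finrank_eq, hbc] at h1
  have hfinrank_eq : Module.finrank k V = d ^ (n + 1) := le_antisymm hfinrank_le hge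
  -- the functionals span the dual space
  have hspanT : Submodule.span K (Set.range Tb) = ⊤ :=
    hTb_indep.span_eq_top_of_card_eq_finrank'
      (by rw [hcardI, Subspace.dual_finrank_eq, hbc, hfinrank_eq])
  -- `Ψt` is injective
  have hΨt_inj : Function.Injective Ψt := by
    rw [← LinearMap.ker_eq_bot, Submodule.eq_bot_iff]
    intro z hz
    rw [LinearMap.mem_ker] at hz
    refine (Module.forall_dual_apply_eq_zero_iff K z).mp fun φ => ?_
    have hφ : φ ∈ Submodule.span K (Set.range Tb) := hspanT ▸ Submodule.mem_top
    obtain ⟨c, rfl⟩ := (Submodule.mem_span_range_iff_exists_fun K).mp hφ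
    simp only [LinearMap.sum_apply, LinearMap.smul_apply, hTb_apply, hz]
    simp
  -- `Psi` is injective
  let β : Module.Basis (Fin (Module.finrank k V)) k V := Module.finBasis k V
  let Bc : Module.Basis (Fin (Module.finrank k V)) K (K ⊗[k] V) := β.baseChange K
  have hone_tmul_inj : Function.Injective (fun t : V => (1 : K) ⊗ₜ[k] t) := by
    intro s t hst
    have hst' : (1 : K) ⊗ₜ[k] s = (1 : K) ⊗ₜ[k] t := hst
    have h1 : ∀ m, Bc.repr ((1 : K) ⊗ₜ[k] s) m = Bc.repr ((1 : K) ⊗ₜ[k] t) m :=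
      fun m => by rw [hst']
    apply β.repr.injective
    ext m
    have h2 := h1 m
    rw [Module.Basis.baseChange_repr_tmul, Module.Basis.baseChange_repr_tmul] at h2
    have h3 : algebraMap k K (β.repr s m) = algebraMap k K (β.repr t m) := by
      simpa [Algebra.algebraMap_eq_smul_one] using h2
    exact (algebraMap k K).injective h3
  have hPsi_inj : Function.Injective (Psi k F K n) := by
    intro s t hst
    refine hone_tmul_inj (hΨt_inj ?_)
    rw [hΨt_tmul, hΨt_tmul, hst]
  -- `Ψt` is surjective
  have hΨt_surj : Function.Surjective Ψt := by
    have hrank : Module.finrank K (K ⊗[k] V)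
        = Module.finrank K ((Fin (n + 1) → (F →ₐ[k] K)) → K) := by
      rw [hbc, hfinrank_eq, Module.finrank_pi, hcardI]
    exact (LinearMap.injective_iff_surjective_of_finrank_eq_finrank hrank).mp hΨt_inj
  -- equivariance of `Ψt`
  have hequiv : ∀ (g : K ≃ₐ[k] K) (z : K ⊗[k] V) (i : Fin (n + 1) → (F →ₐ[k] K)),
      Ψt (LinearMap.rTensor V g.toLinearMap z) i
        = g (Ψt z (fun m => (g.symm.toAlgHom).comp (i m))) := by
    intro g z i
    induction z using TensorProduct.induction_on with
    | zero =>
        rw [LinearMap.map_zero, LinearMap.map_zero]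
        simp
    | tmul x t =>
        rw [LinearMap.rTensor_tmul, hΨt_tmul, hΨt_tmul]
        simp only [Pi.smul_apply, smul_eq_mul, AlgEquiv.toLinearMap_apply, map_mul]
        congr 1
        rw [psi_homog]
        have hcomp : (fun m => (g.toAlgHom).comp ((g.symm.toAlgHom).comp (i m))) = i := by
          funext m
          ext x'
          simp
        rw [hcomp]
    | add z w hz hw => simp only [map_add, Pi.add_apply, hz, hw]
  refine ⟨psi_tprod k F K n, hPsi_inj, ?_⟩
  ext h
  constructor
  · rintro ⟨t, rfl⟩ g i
    exact psi_homog k F K n t g i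
  · intro hh
    obtain ⟨z, hzh⟩ := hΨt_surj h
    -- `z` is fixed by all `g ⊗ 1`
    have hfix : ∀ g : K ≃ₐ[k] K, LinearMap.rTensor V g.toLinearMap z = z := by
      intro g
      apply hΨt_inj
      funext i
      rw [hequiv, hzh]
      have := hh g (fun m => (g.symm.toAlgHom).comp (i m))
      rw [this]
      congr 1
      funext m
      ext x'
      simp
    set c : Fin (Module.finrank k V) → K := fun j => Bc.repr z j with hc
    have hzc : z = ∑ j, c j • Bc j := (Bc.sum_repr z).symm
    have hBc_smul : ∀ (x : K) (j), x • Bc j = x ⊗ₜ[k] β j := by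
      intro x j
      rw [Module.Basis.baseChange_apply, TensorProduct.smul_tmul', smul_eq_mul, mul_one]
    have hfix' : ∀ (g : K ≃ₐ[k] K) (j), g (c j) = c j := by
      intro g j
      have h1 : LinearMap.rTensor V g.toLinearMap z = ∑ j, g (c j) • Bc j := by
        rw [hzc, map_sum]
        refine Finset.sum_congr rfl fun j _ => ?_
        rw [hBc_smul, LinearMap.rTensor_tmul, hBc_smul]
        rfl
      have h2 : (∑ j, g (c j) • Bc j) = ∑ j, c j • Bc j := by
        rw [← h1, hfix g, hzc]
      have h3 : (fun j => g (c j)) = c := by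
        calc (fun j => g (c j))
            = ⇑(Bc.repr (∑ j, g (c j) • Bc j)) := (Bc.repr_sum_self _).symm
          _ = ⇑(Bc.repr (∑ j, c j • Bc j)) := by rw [h2]
          _ = c := Bc.repr_sum_self _
      exact congrFun h3 j
    have hmem : ∀ j, c j ∈ (⊥ : IntermediateField k K) := by
      intro j
      have hm : c j ∈ IntermediateField.fixedField
          (IntermediateField.fixingSubgroup (⊥ : IntermediateField k K)) := fun g => by
        rw [Subgroup.smul_def, AlgEquiv.smul_def]
        exact hfix' g j
      rwa [IsGalois.fixedField_fixingSubgroup] at hm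
    choose a ha using fun j => IntermediateField.mem_bot.mp (hmem j)
    refine ⟨∑ j, a j • β j, ?_⟩
    have h1t : (1 : K) ⊗ₜ[k] (∑ j, a j • β j) = z := by
      rw [hzc, TensorProduct.tmul_sum]
      refine Finset.sum_congr rfl fun j _ => ?_
      rw [hBc_smul, ← ha j, ← TensorProduct.smul_tmul, ← Algebra.algebraMap_eq_smul_one]
    have : Psi k F K n (∑ j, a j • β j) = Ψt ((1 : K) ⊗ₜ[k] (∑ j, a j • β j)) := by
      rw [hΨt_tmul, one_smul]
    rw [this, h1t, hzh]
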